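/- Let A be a real p×n matrix such that A·Aᵀ is invertible. Then there exist constants C > 0 and ε₀ > 0 such that for every ε ∈ (0, ε₀], every real p×n matrix dA with operator norm ‖dA‖ ≤ ε, and every dx ∈ ℝⁿ with A·dx = 0 and ‖dx‖₂ ≤ ε, the Euclidean distance from dx to the perturbed solution set 𝒫̃ = {x ∈ ℝⁿ | (A + dA)·x = 0} satisfies inf{‖dx − y‖₂ : y ∈ 𝒫̃} ≤ C·ε². (In other words, a point of the hyperplane 𝒫 = {x | A·x = 0} at distance O(ε) from the origin lies within O(ε²) of the perturbed hyperplane when the perturbation of A is of size O(ε).) -/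

import Mathlib

open Matrix

/-- Euclidean norm of a finitely-indexed real vector. -/
noncomputable def euclNorm {ι : Type*} [Fintype ι] (y : ι → ℝ) : ℝ :=
  Real.sqrt (∑ i, (y i) ^ 2)

noncomputable def clmE {a b : ℕ} (M : Matrix (Fin a) (Fin b) ℝ) :
    EuclideanSpace ℝ (Fin b) →L[ℝ] EuclideanSpace ℝ (Fin a) :=
  LinearMap.toContinuousLinearMap (Matrix.toEuclideanLin M)

lemma euclNorm_eq {k : ℕ} (y : Fin k → ℝ) :
    euclNorm y = ‖(WithLp.equiv 2 (Fin k → ℝ)).symm y‖ := by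
  rw [EuclideanSpace.norm_eq, euclNorm]
  congr 1
  refine Finset.sum_congr rfl fun i _ => ?_
  simp [Real.norm_eq_abs, sq_abs]

lemma euclNorm_nonneg {k : ℕ} (y : Fin k → ℝ) : 0 ≤ euclNorm y := Real.sqrt_nonneg _

lemma clmE_apply {a b : ℕ} (M : Matrix (Fin a) (Fin b) ℝ) (v : EuclideanSpace ℝ (Fin b)) :
    clmE M v = (WithLp.equiv 2 (Fin a → ℝ)).symm (M *ᵥ (WithLp.equiv 2 (Fin b → ℝ)) v) := by
  simp [clmE, Matrix.toEuclideanLin_apply]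

lemma clmE_mul {a b c : ℕ} (M : Matrix (Fin a) (Fin b) ℝ) (N : Matrix (Fin b) (Fin c) ℝ) :
    clmE (M * N) = (clmE M).comp (clmE N) := by
  ext v
  simp [clmE_apply, Matrix.mulVec_mulVec]

lemma clmE_add {a b : ℕ} (M N : Matrix (Fin a) (Fin b) ℝ) :
    clmE (M + N) = clmE M + clmE N := by
  ext v
  simp [clmE_apply, Matrix.add_mulVec]

lemma clmE_one {a : ℕ} : clmE (1 : Matrix (Fin a) (Fin a) ℝ) = 1 := by
  ext v
  simp [clmE_apply, Matrix.one_mulVec]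

set_option maxHeartbeats 2000000 in
/-- Let `A` be a real `p×n` matrix with `A·Aᵀ` invertible.  There exist
`C > 0` and `ε₀ > 0` such that for every `ε ∈ (0, ε₀]`, every perturbation `dA` whose
(Euclidean) operator norm is at most `ε` (expressed by `‖dA·v‖₂ ≤ ε·‖v‖₂` for all `v`),
and every `dx` with `A·dx = 0` and `‖dx‖₂ ≤ ε`, the Euclidean distance from `dx` to the
perturbed solution set `{x | (A+dA)·x = 0}` is at most `C·ε²`. -/
theorem dist_to_perturbed_hyperplane {p n : ℕ}
    (A : Matrix (Fin p) (Fin n) ℝ) (hA : IsUnit (A * Aᵀ)) :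
    ∃ C > (0 : ℝ), ∃ ε₀ > (0 : ℝ), ∀ ε : ℝ, 0 < ε → ε ≤ ε₀ →
      ∀ dA : Matrix (Fin p) (Fin n) ℝ,
        (∀ v : Fin n → ℝ, euclNorm (dA.mulVec v) ≤ ε * euclNorm v) →
        ∀ dx : Fin n → ℝ, A.mulVec dx = 0 → euclNorm dx ≤ ε →
          sInf {d : ℝ | ∃ y : Fin n → ℝ, (A + dA).mulVec y = 0 ∧ d = euclNorm (dx - y)}
            ≤ C * ε ^ 2 := by
  classical
  obtain ⟨u, hu⟩ := hA
  have hBB : clmE (A * Aᵀ) * clmE (↑u⁻¹ : Matrix (Fin p) (Fin p) ℝ) = 1 := by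
    rw [ContinuousLinearMap.mul_def, ← clmE_mul, ← hu, Units.mul_inv, clmE_one]
  have hBB' : clmE (↑u⁻¹ : Matrix (Fin p) (Fin p) ℝ) * clmE (A * Aᵀ) = 1 := by
    rw [ContinuousLinearMap.mul_def, ← clmE_mul, ← hu, Units.inv_mul, clmE_one]
  set U : (EuclideanSpace ℝ (Fin p) →L[ℝ] EuclideanSpace ℝ (Fin p))ˣ :=
    ⟨clmE (A * Aᵀ), clmE (↑u⁻¹ : Matrix (Fin p) (Fin p) ℝ), hBB, hBB'⟩ with hU
  have hUinv : (↑U⁻¹ : EuclideanSpace ℝ (Fin p) →L[ℝ] EuclideanSpace ℝ (Fin p))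
      = clmE (↑u⁻¹ : Matrix (Fin p) (Fin p) ℝ) := rfl
  set α : ℝ := ‖clmE Aᵀ‖ with hα
  set β : ℝ := ‖clmE (↑u⁻¹ : Matrix (Fin p) (Fin p) ℝ)‖ with hβ
  have hα0 : 0 ≤ α := norm_nonneg _
  have hβ0 : 0 ≤ β := norm_nonneg _
  refine ⟨2 * (α + 1) * (β + 1) + 1, by positivity, 1 / (2 * (α + 1) * (β + 1)), by positivity,
    fun ε hε0 hεle dA hdA dx hdx hdxnorm => ?_⟩
  set M : Matrix (Fin p) (Fin n) ℝ := A + dA with hM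
  have hdA_op : ‖clmE dA‖ ≤ ε := by
    refine ContinuousLinearMap.opNorm_le_bound _ hε0.le fun x => ?_
    rw [clmE_apply, ← euclNorm_eq]
    calc euclNorm (dA *ᵥ (WithLp.equiv 2 (Fin n → ℝ)) x)
        ≤ ε * euclNorm ((WithLp.equiv 2 (Fin n → ℝ)) x) := hdA _
      _ = ε * ‖x‖ := by rw [euclNorm_eq]; simp
  set Eop := clmE (dA * Aᵀ) with hEop
  have hEop_norm : ‖Eop‖ ≤ ε * α := by
    rw [hEop, clmE_mul]
    calc ‖(clmE dA).comp (clmE Aᵀ)‖ ≤ ‖clmE dA‖ * ‖clmE Aᵀ‖ :=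
          ContinuousLinearMap.opNorm_comp_le _ _
      _ ≤ ε * α := mul_le_mul_of_nonneg_right hdA_op hα0
  have hsmall : β * (ε * α) ≤ 1 / 2 := by
    have h2 : (1 / (2 * (α + 1) * (β + 1))) * ((α + 1) * (β + 1)) = 1 / 2 := by
      field_simp
    have h1 : ε * (α * β) ≤ (1 / (2 * (α + 1) * (β + 1))) * ((α + 1) * (β + 1)) := by
      apply mul_le_mul hεle (by nlinarith) (by positivity) (by positivity)
    nlinarith
  set t := -((↑U⁻¹ : EuclideanSpace ℝ (Fin p) →L[ℝ] EuclideanSpace ℝ (Fin p)) * Eop) with ht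
  have ht_norm : ‖t‖ ≤ 1 / 2 := by
    calc ‖t‖ = ‖clmE (↑u⁻¹ : Matrix (Fin p) (Fin p) ℝ) * Eop‖ := by rw [ht, norm_neg, hUinv]
      _ ≤ β * ‖Eop‖ := norm_mul_le _ _
      _ ≤ β * (ε * α) := mul_le_mul_of_nonneg_left hEop_norm hβ0
      _ ≤ 1 / 2 := hsmall
  have ht_lt : ‖t‖ < 1 := lt_of_le_of_lt ht_norm (by norm_num)
  set V : (EuclideanSpace ℝ (Fin p) →L[ℝ] EuclideanSpace ℝ (Fin p))ˣ :=
    U * Units.oneSub t ht_lt with hV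
  have hMA : clmE (M * Aᵀ) = (↑U : EuclideanSpace ℝ (Fin p) →L[ℝ] EuclideanSpace ℝ (Fin p)) + Eop := by
    rw [hM, Matrix.add_mul, clmE_add]
  have hVval : (↑V : EuclideanSpace ℝ (Fin p) →L[ℝ] EuclideanSpace ℝ (Fin p))
      = clmE (M * Aᵀ) := by
    have h : (↑V : EuclideanSpace ℝ (Fin p) →L[ℝ] EuclideanSpace ℝ (Fin p))
        = (↑U : _) * (1 - t) := by
      rw [hV, Units.val_mul, Units.val_oneSub]
    rw [h, ht, sub_neg_eq_add, mul_add, mul_one, ← mul_assoc, U.mul_inv, one_mul]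
    exact hMA.symm
  set r : EuclideanSpace ℝ (Fin p) := (WithLp.equiv 2 (Fin p → ℝ)).symm (M *ᵥ dx) with hr
  set zE : EuclideanSpace ℝ (Fin p) :=
    (↑V⁻¹ : EuclideanSpace ℝ (Fin p) →L[ℝ] EuclideanSpace ℝ (Fin p)) r with hz
  set z : Fin p → ℝ := (WithLp.equiv 2 (Fin p → ℝ)) zE with hzv
  have hVz : clmE (M * Aᵀ) zE = r := by
    rw [← hVval, hz]
    calc (↑V : EuclideanSpace ℝ (Fin p) →L[ℝ] EuclideanSpace ℝ (Fin p))
          ((↑V⁻¹ : EuclideanSpace ℝ (Fin p) →L[ℝ] EuclideanSpace ℝ (Fin p)) r)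
        = ((↑V * ↑V⁻¹ : EuclideanSpace ℝ (Fin p) →L[ℝ] EuclideanSpace ℝ (Fin p))) r := rfl
      _ = (1 : EuclideanSpace ℝ (Fin p) →L[ℝ] EuclideanSpace ℝ (Fin p)) r := by rw [V.mul_inv]
      _ = r := rfl
  -- norm of r
  have hMdx : M *ᵥ dx = dA *ᵥ dx := by
    rw [hM, Matrix.add_mulVec, hdx, zero_add]
  have hr_norm : ‖r‖ ≤ ε * ε := by
    rw [hr, ← euclNorm_eq, hMdx]
    calc euclNorm (dA *ᵥ dx) ≤ ε * euclNorm dx := hdA dx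
      _ ≤ ε * ε := mul_le_mul_of_nonneg_left hdxnorm hε0.le
  -- bound on zE
  have hUz : clmE (A * Aᵀ) zE + Eop zE = r := by
    have := hVz
    rw [hMA] at this
    simpa using this
  have hz_fix : zE = clmE (↑u⁻¹ : Matrix (Fin p) (Fin p) ℝ) (r - Eop zE) := by
    have h1 : clmE (A * Aᵀ) zE = r - Eop zE := by
      rw [← hUz]; abel
    have h2 := congrArg (fun f : EuclideanSpace ℝ (Fin p) →L[ℝ] EuclideanSpace ℝ (Fin p) => f zE)
      hBB'
    simp only [ContinuousLinearMap.mul_apply, ContinuousLinearMap.one_apply] at h2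
    conv_lhs => rw [← h2, h1]
  have hzE_norm : ‖zE‖ ≤ 2 * β * ‖r‖ := by
    have h1 : ‖zE‖ ≤ β * (‖r‖ + ‖Eop zE‖) := by
      calc ‖zE‖ = ‖clmE (↑u⁻¹ : Matrix (Fin p) (Fin p) ℝ) (r - Eop zE)‖ := by rw [← hz_fix]
        _ ≤ β * ‖r - Eop zE‖ := (clmE _).le_opNorm _
        _ ≤ β * (‖r‖ + ‖Eop zE‖) := mul_le_mul_of_nonneg_left (norm_sub_le _ _) hβ0
    have h2 : ‖Eop zE‖ ≤ (ε * α) * ‖zE‖ := by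
      calc ‖Eop zE‖ ≤ ‖Eop‖ * ‖zE‖ := Eop.le_opNorm _
        _ ≤ (ε * α) * ‖zE‖ := mul_le_mul_of_nonneg_right hEop_norm (norm_nonneg _)
    have h3 : β * ‖Eop zE‖ ≤ (1 / 2) * ‖zE‖ := by
      calc β * ‖Eop zE‖ ≤ β * ((ε * α) * ‖zE‖) := mul_le_mul_of_nonneg_left h2 hβ0
        _ = (β * (ε * α)) * ‖zE‖ := by ring
        _ ≤ (1 / 2) * ‖zE‖ := mul_le_mul_of_nonneg_right hsmall (norm_nonneg _)
    rw [mul_add] at h1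
    linarith
  -- the approximating point
  set y : Fin n → ℝ := dx - Aᵀ *ᵥ z with hy
  have hy_mem : (A + dA) *ᵥ y = 0 := by
    have hMAz : (M * Aᵀ) *ᵥ z = M *ᵥ dx := by
      have := congrArg (WithLp.equiv 2 (Fin p → ℝ)) hVz
      rw [clmE_apply] at this
      simpa [hzv, hr] using this
    show M *ᵥ y = 0
    rw [hy, Matrix.mulVec_sub, Matrix.mulVec_mulVec, hMAz, sub_self]
  have hdxy : dx - y = Aᵀ *ᵥ z := by rw [hy]; abel
  have hdist : euclNorm (dx - y) ≤ α * (2 * β * (ε * ε)) := by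
    rw [hdxy, euclNorm_eq]
    have : (WithLp.equiv 2 (Fin n → ℝ)).symm (Aᵀ *ᵥ z) = clmE Aᵀ zE := by
      rw [clmE_apply, hzv]
    rw [this]
    calc ‖clmE Aᵀ zE‖ ≤ α * ‖zE‖ := (clmE Aᵀ).le_opNorm _
      _ ≤ α * (2 * β * ‖r‖) := mul_le_mul_of_nonneg_left hzE_norm hα0
      _ ≤ α * (2 * β * (ε * ε)) := by
          apply mul_le_mul_of_nonneg_left _ hα0
          exact mul_le_mul_of_nonneg_left hr_norm (by positivity)
  -- conclude via sInf
  have hbdd : BddBelow {d : ℝ | ∃ y : Fin n → ℝ, (A + dA).mulVec y = 0 ∧ d = euclNorm (dx - y)} := by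
    refine ⟨0, fun d hd => ?_⟩
    obtain ⟨w, -, hw⟩ := hd
    rw [hw]; exact euclNorm_nonneg _
  have hmem : euclNorm (dx - y) ∈
      {d : ℝ | ∃ y : Fin n → ℝ, (A + dA).mulVec y = 0 ∧ d = euclNorm (dx - y)} :=
    ⟨y, hy_mem, rfl⟩
  calc sInf {d : ℝ | ∃ y : Fin n → ℝ, (A + dA).mulVec y = 0 ∧ d = euclNorm (dx - y)}
      ≤ euclNorm (dx - y) := csInf_le hbdd hmem
    _ ≤ α * (2 * β * (ε * ε)) := hdist
    _ ≤ (2 * (α + 1) * (β + 1) + 1) * ε ^ 2 := by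
        nlinarith [mul_nonneg (show (0:ℝ) ≤ 2 * α + 2 * β + 3 by linarith) (sq_nonneg ε)]
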